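/- Fix r > 0 and set x₁* = (-r, 0, …, 0), x₂* = (r, 0, …, 0) in ℝⁿ. Let x = (x₁, x̃), y = (y₁, ỹ) with -r ≤ x₁ = y₁ ≤ r and ‖x̃‖ > ‖ỹ‖, and let φ̃ᵢ, ψ be as defined from parameters σ₁, σ₂, L (with x, y in the domain where the arccos expressions are defined). If φ̃₁(x) + φ̃₂(x) ≥ ψ(x), then either φ̃₁(y) + φ̃₂(y) > ψ(y) or y ∈ {x₁*, x₂*}. -/

import Mathlib

open RealInnerProductSpace in
lemma my_arccos_anti : Antitone Real.arccos := fun _ _ h =>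
  sub_le_sub_left (Real.monotone_arcsin h) _

lemma my_single_decomp {n : ℕ} (u : EuclideanSpace ℝ (Fin (n+1))) (c : ℝ) :
    u - EuclideanSpace.single 0 c
      = EuclideanSpace.single 0 (u 0 - c) + (u - EuclideanSpace.single 0 (u 0)) := by
  ext j
  by_cases hj : j = 0 <;>
    simp [hj, EuclideanSpace.single_apply]

lemma my_norm_sq {n : ℕ} (u : EuclideanSpace ℝ (Fin (n+1))) (c : ℝ) :
    ‖u - EuclideanSpace.single 0 c‖^2
      = (u 0 - c)^2 + ‖u - EuclideanSpace.single 0 (u 0)‖^2 := by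
  have horth : (inner ℝ (EuclideanSpace.single 0 (u 0 - c))
      (u - EuclideanSpace.single 0 (u 0)) : ℝ) = 0 := by
    rw [EuclideanSpace.inner_single_left]
    simp [EuclideanSpace.single_apply]
  rw [my_single_decomp u c, norm_add_sq_real, horth]
  simp [EuclideanSpace.norm_single, sq_abs]

lemma my_angle_single {n : ℕ} (u : EuclideanSpace ℝ (Fin (n+1))) {c : ℝ} (hc : 0 < c) :
    InnerProductGeometry.angle u (EuclideanSpace.single 0 c)
      = Real.arccos (u 0 / ‖u‖) := by
  rw [InnerProductGeometry.angle]
  congr 1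
  rw [real_inner_comm, EuclideanSpace.inner_single_left]
  simp only [RCLike.star_def, conj_trivial, EuclideanSpace.norm_single, Real.norm_eq_abs,
    abs_of_pos hc]
  rw [mul_comm c (u 0), mul_div_mul_right _ _ (ne_of_gt hc)]

set_option maxHeartbeats 1000000 in
theorem stmt_8 {n : ℕ} (r σ₁ σ₂ L : ℝ) (hr : 0 < r) (h1 : 0 < σ₁) (h2 : 0 < σ₂) (hL : 0 < L)
    (x₁s x₂s : EuclideanSpace ℝ (Fin (n + 1)))
    (hx1 : x₁s = EuclideanSpace.single 0 (-r)) (hx2 : x₂s = EuclideanSpace.single 0 r)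
    (x y : EuclideanSpace ℝ (Fin (n + 1)))
    (hfirst : x 0 = y 0) (hlow : -r ≤ x 0) (hhigh : x 0 ≤ r)
    (htail : ‖y - EuclideanSpace.single 0 (y 0)‖ < ‖x - EuclideanSpace.single 0 (x 0)‖)
    (hbx1 : ‖x - x₁s‖ ≤ L / σ₁) (hbx2 : ‖x - x₂s‖ ≤ L / σ₂)
    (hby1 : ‖y - x₁s‖ ≤ L / σ₁) (hby2 : ‖y - x₂s‖ ≤ L / σ₂)
    (h : Real.pi - (InnerProductGeometry.angle (x - x₂s) (x₂s - x₁s) -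
          InnerProductGeometry.angle (x - x₁s) (x₂s - x₁s)) ≤
        Real.arccos (σ₁ / L * ‖x - x₁s‖) + Real.arccos (σ₂ / L * ‖x - x₂s‖)) :
    (Real.pi - (InnerProductGeometry.angle (y - x₂s) (x₂s - x₁s) -
          InnerProductGeometry.angle (y - x₁s) (x₂s - x₁s)) <
        Real.arccos (σ₁ / L * ‖y - x₁s‖) + Real.arccos (σ₂ / L * ‖y - x₂s‖)) ∨
      y = x₁s ∨ y = x₂s := by
  by_cases hy1 : y = x₁s
  · exact Or.inr (Or.inl hy1)
  by_cases hy2 : y = x₂s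
  · exact Or.inr (Or.inr hy2)
  left
  have hy0 : y 0 = x 0 := hfirst.symm
  set a := x 0 with ha
  -- the direction vector
  have hv : x₂s - x₁s = EuclideanSpace.single 0 (2*r) := by
    rw [hx1, hx2]; ext j
    by_cases hj : j = 0 <;> simp [hj, EuclideanSpace.single_apply] <;> ring
  -- first coordinates of differences
  have hx10 : (x - x₁s) 0 = a + r := by rw [hx1]; simp [EuclideanSpace.single_apply, ha]
  have hx20 : (x - x₂s) 0 = a - r := by rw [hx2]; simp [EuclideanSpace.single_apply, ha]
  have hy10 : (y - x₁s) 0 = a + r := by rw [hx1]; simp [EuclideanSpace.single_apply, hy0]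
  have hy20 : (y - x₂s) 0 = a - r := by rw [hx2]; simp [EuclideanSpace.single_apply, hy0]
  set tx := ‖x - EuclideanSpace.single 0 a‖ with htx
  set ty := ‖y - EuclideanSpace.single 0 (y 0)‖ with hty
  have htxy : ty < tx := htail
  have hty0 : 0 ≤ ty := norm_nonneg _
  -- norm squares
  have sq1x : ‖x - x₁s‖^2 = (a + r)^2 + tx^2 := by
    rw [hx1, my_norm_sq, ← htx]; try ring
  have sq2x : ‖x - x₂s‖^2 = (a - r)^2 + tx^2 := by
    rw [hx2, my_norm_sq, ← htx]; try ring
  have sq1y : ‖y - x₁s‖^2 = (a + r)^2 + ty^2 := by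
    rw [hx1, my_norm_sq, ← hty, hy0]; try ring
  have sq2y : ‖y - x₂s‖^2 = (a - r)^2 + ty^2 := by
    rw [hx2, my_norm_sq, ← hty, hy0]; try ring
  set d1x := ‖x - x₁s‖; set d2x := ‖x - x₂s‖; set d1y := ‖y - x₁s‖; set d2y := ‖y - x₂s‖
  have hd1y_pos : 0 < d1y := norm_pos_iff.mpr (sub_ne_zero.mpr hy1)
  have hd2y_pos : 0 < d2y := norm_pos_iff.mpr (sub_ne_zero.mpr hy2)
  have hty2 : ty^2 < tx^2 := pow_lt_pow_left₀ htxy hty0 (by norm_num)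
  have hd1 : d1y < d1x := by
    have : d1y^2 < d1x^2 := by rw [sq1x, sq1y]; linarith
    exact lt_of_pow_lt_pow_left₀ 2 (norm_nonneg _) this
  have hd2 : d2y < d2x := by
    have : d2y^2 < d2x^2 := by rw [sq2x, sq2y]; linarith
    exact lt_of_pow_lt_pow_left₀ 2 (norm_nonneg _) this
  have hd1x_pos : 0 < d1x := lt_trans hd1y_pos hd1
  have hd2x_pos : 0 < d2x := lt_trans hd2y_pos hd2
  have h2r : (0:ℝ) < 2*r := by linarith
  -- angle rewrites
  have a1x : InnerProductGeometry.angle (x - x₁s) (x₂s - x₁s)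
      = Real.arccos ((a + r) / d1x) := by rw [hv, my_angle_single _ h2r, hx10]
  have a2x : InnerProductGeometry.angle (x - x₂s) (x₂s - x₁s)
      = Real.arccos ((a - r) / d2x) := by rw [hv, my_angle_single _ h2r, hx20]
  have a1y : InnerProductGeometry.angle (y - x₁s) (x₂s - x₁s)
      = Real.arccos ((a + r) / d1y) := by rw [hv, my_angle_single _ h2r, hy10]
  have a2y : InnerProductGeometry.angle (y - x₂s) (x₂s - x₁s)
      = Real.arccos ((a - r) / d2y) := by rw [hv, my_angle_single _ h2r, hy20]
  -- angle monotonicity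
  have hA1 : Real.arccos ((a + r) / d1y) ≤ Real.arccos ((a + r) / d1x) := by
    apply my_arccos_anti
    exact div_le_div_of_nonneg_left (by linarith) hd1y_pos hd1.le
  have hA2 : Real.arccos ((a - r) / d2x) ≤ Real.arccos ((a - r) / d2y) := by
    apply my_arccos_anti
    rw [div_le_div_iff₀ hd2y_pos hd2x_pos]
    exact mul_le_mul_of_nonpos_left hd2.le (by linarith)
  -- RHS monotonicity (strict)
  have key : ∀ σ dx dy : ℝ, 0 < σ → dx ≤ L / σ → 0 ≤ dy → dy < dx →
      Real.arccos (σ / L * dx) < Real.arccos (σ / L * dy) := by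
    intro σ dx dy hσ hb hdy hlt
    have hσL : 0 < σ / L := by positivity
    have h1' : σ / L * dx ≤ 1 := by
      calc σ / L * dx ≤ σ / L * (L / σ) := mul_le_mul_of_nonneg_left hb hσL.le
        _ = 1 := by field_simp
    have hdy' : 0 ≤ σ / L * dy := mul_nonneg hσL.le hdy
    have hdx' : 0 ≤ σ / L * dx := mul_nonneg hσL.le (hdy.trans hlt.le)
    refine Real.strictAntiOn_arccos ⟨by linarith, ?_⟩ ⟨by linarith, h1'⟩
      (mul_lt_mul_of_pos_left hlt hσL)
    exact le_trans (mul_le_mul_of_nonneg_left hlt.le hσL.le) h1'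
  have hR1 := key σ₁ d1x d1y h1 hbx1 (norm_nonneg _) hd1
  have hR2 := key σ₂ d2x d2y h2 hbx2 (norm_nonneg _) hd2
  rw [a1y, a2y]
  rw [a1x, a2x] at h
  linarith
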